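/- For every integer k ≥ 3, the set of GA1 numbers N with Ω(N) = k is finite. More precisely, any GA1 number N with Ω(N) = k > 2 satisfies log N / log log N ≤ k. -/

import Mathlib

open Real Filter

noncomputable def G (n : ℕ) : ℝ := (∑ d ∈ n.divisors, (d : ℝ)) / (n * Real.log (Real.log n))

def sigma' (n : ℕ) : ℕ := ∑ d ∈ n.divisors, d

def IsGA1 (N : ℕ) : Prop :=
  1 < N ∧ ¬ N.Prime ∧ ∀ p : ℕ, p.Prime → p ∣ N → G (N / p) ≤ G N

def IsGA2 (N : ℕ) : Prop :=
  1 < N ∧ ∀ a : ℕ, 0 < a → G (a * N) ≤ G N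

def IsCA (N : ℕ) (ε : ℝ) : Prop :=
  0 < N ∧ ∀ n : ℕ, 1 < n → (sigma' n : ℝ) / (n : ℝ) ^ (1 + ε) ≤ (sigma' N : ℝ) / (N : ℝ) ^ (1 + ε)

noncomputable def F (t : ℝ) (k : ℕ) : ℝ :=
  Real.log (1 + 1 / (∑ i ∈ Finset.Icc 1 k, t ^ i)) / Real.log t

noncomputable def chebTheta (n : ℕ) : ℝ :=
  ∑ p ∈ Finset.filter Nat.Prime (Finset.range (n + 1)), Real.log p

/-- Submultiplicative bound for the sum of divisors: `σ(m·p) ≤ (p+1)·σ(m)`. -/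
lemma sigma_mul_prime_le (m p : ℕ) (hp : p.Prime) (hm : m ≠ 0) :
    (∑ d ∈ (m*p).divisors, d) ≤ (p+1) * ∑ d ∈ m.divisors, d := by
  have hsub : (m*p).divisors ⊆ m.divisors ∪ m.divisors.image (p * ·) := by
    intro d hd
    obtain ⟨hdvd, hne⟩ := Nat.mem_divisors.mp hd
    by_cases h : d ∣ m
    · exact Finset.mem_union_left _ (Nat.mem_divisors.mpr ⟨h, hm⟩)
    · have hpd : p ∣ d := by
        by_contra hpd
        exact h ((hp.coprime_iff_not_dvd.mpr hpd).symm.dvd_of_dvd_mul_right hdvd)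
      obtain ⟨e, rfl⟩ := hpd
      have he : e ∣ m := by
        have : p * e ∣ p * m := by rwa [mul_comm m p] at hdvd
        exact (mul_dvd_mul_iff_left hp.pos.ne').mp this
      exact Finset.mem_union_right _ (Finset.mem_image.mpr ⟨e, Nat.mem_divisors.mpr ⟨he, hm⟩, rfl⟩)
  calc (∑ d ∈ (m*p).divisors, d) ≤ ∑ d ∈ m.divisors ∪ m.divisors.image (p * ·), d :=
        Finset.sum_le_sum_of_subset hsub
    _ ≤ (∑ d ∈ m.divisors, d) + ∑ d ∈ m.divisors.image (p * ·), d := by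
        have h := Finset.sum_union_inter (s₁ := m.divisors) (s₂ := m.divisors.image (p * ·))
          (f := fun d => d)
        omega
    _ = (∑ d ∈ m.divisors, d) + ∑ d ∈ m.divisors, p * d := by
        rw [Finset.sum_image (fun a _ b _ h => Nat.eq_of_mul_eq_mul_left hp.pos h)]
    _ = (p+1) * ∑ d ∈ m.divisors, d := by rw [← Finset.mul_sum]; ring

lemma two_pow_cardFactors_le (n : ℕ) (hn : n ≠ 0) :
    2 ^ (ArithmeticFunction.cardFactors n) ≤ n := by
  rw [ArithmeticFunction.cardFactors_apply]
  calc 2 ^ n.primeFactorsList.length ≤ n.primeFactorsList.prod :=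
        List.pow_card_le_prod _ _ (fun x hx => (Nat.prime_of_mem_primeFactorsList hx).two_le)
    _ = n := Nat.prod_primeFactorsList hn

set_option maxHeartbeats 800000 in
/-- Main bound for GA1 numbers with at least 3 prime factors. -/
lemma ga1_key (k N : ℕ) (hk : 3 ≤ k) (hGA : IsGA1 N)
    (hΩ : ArithmeticFunction.cardFactors N = k) :
    8 ≤ N ∧ Real.log N ≤ k * Real.log (Real.log N) := by
  obtain ⟨hN1, -, hGA1⟩ := hGA
  have hN0 : N ≠ 0 := by omega
  have hne : N.primeFactors.Nonempty := Nat.nonempty_primeFactors.mpr hN1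
  set p := N.primeFactors.max' hne with hpdef
  have hpmem : p ∈ N.primeFactors := Finset.max'_mem _ _
  have hp : p.Prime := Nat.prime_of_mem_primeFactors hpmem
  have hpdvd : p ∣ N := Nat.dvd_of_mem_primeFactors hpmem
  set m := N / p with hmdef
  have hmp : N = m * p := (Nat.div_mul_cancel hpdvd).symm
  have hm0 : m ≠ 0 := by rintro h; rw [h] at hmp; simp at hmp; omega
  have hΩm : ArithmeticFunction.cardFactors m + 1 = k := by
    rw [← hΩ, hmp, ArithmeticFunction.cardFactors_mul hm0 hp.pos.ne',
      ArithmeticFunction.cardFactors_apply_prime hp]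
  have hm4 : 4 ≤ m := by
    have h1 := two_pow_cardFactors_le m hm0
    have h2 : 2 ≤ ArithmeticFunction.cardFactors m := by omega
    calc 4 = 2^2 := rfl
      _ ≤ 2 ^ ArithmeticFunction.cardFactors m := Nat.pow_le_pow_right (by norm_num) h2
      _ ≤ m := h1
  have hN8 : 8 ≤ N := by
    have h2 := hp.two_le
    rw [hmp]; nlinarith
  -- real preliminaries
  have hm4R : (4:ℝ) ≤ m := by exact_mod_cast hm4
  have hN8R : (8:ℝ) ≤ N := by exact_mod_cast hN8
  have hpR : (2:ℝ) ≤ p := by exact_mod_cast hp.two_le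
  have hmpos : (0:ℝ) < m := by linarith
  have hNpos : (0:ℝ) < N := by linarith
  have hppos : (0:ℝ) < p := by linarith
  have he9 := Real.exp_one_lt_d9
  have hlogm1 : 1 < Real.log m := by
    have h4 : (1:ℝ) < Real.log 4 := by
      rw [Real.lt_log_iff_exp_lt (by norm_num)]; linarith
    linarith [Real.log_le_log (by norm_num : (0:ℝ) < 4) hm4R]
  have hlogN2 : 2 < Real.log N := by
    have h8 : (2:ℝ) < Real.log 8 := by
      rw [Real.lt_log_iff_exp_lt (by norm_num), show (2:ℝ) = 1+1 by norm_num, Real.exp_add]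
      nlinarith [Real.exp_pos 1]
    linarith [Real.log_le_log (by norm_num : (0:ℝ) < 8) hN8R]
  have hu0 : (0:ℝ) < Real.log m := by linarith
  have hx0 : (0:ℝ) < Real.log N := by linarith
  have hA : 0 < Real.log (Real.log m) := Real.log_pos hlogm1
  have hB : 0 < Real.log (Real.log N) := Real.log_pos (by linarith)
  -- sigma bound, cast to ℝ
  have hsigN : (∑ d ∈ N.divisors, (d:ℝ)) ≤ ((p:ℝ)+1) * ∑ d ∈ m.divisors, (d:ℝ) := by
    have h := sigma_mul_prime_le m p hp hm0
    have h' : ((∑ d ∈ (m*p).divisors, d : ℕ) : ℝ) ≤ (((p+1) * ∑ d ∈ m.divisors, d : ℕ) : ℝ) :=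
      Nat.cast_le.mpr h
    push_cast at h'
    rw [hmp]
    exact h'
  have hSm : (4:ℝ) ≤ ∑ d ∈ m.divisors, (d:ℝ) := by
    have h := Finset.single_le_sum (f := fun d : ℕ => (d:ℝ)) (fun i _ => by positivity)
      (Nat.mem_divisors_self m hm0)
    linarith
  -- from the GA1 inequality, derive p·log log N ≤ (p+1)·log log m
  have hG := hGA1 p hp hpdvd
  rw [← hmdef] at hG
  unfold G at hG
  rw [div_le_div_iff₀ (by positivity) (by positivity)] at hG
  have hNmp : (N:ℝ) = (m:ℝ) * (p:ℝ) := by rw [hmp]; push_cast; ring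
  have hG2 : (∑ d ∈ m.divisors, (d:ℝ)) * ((m:ℝ) * (p:ℝ) * Real.log (Real.log N)) ≤
      (((p:ℝ)+1) * ∑ d ∈ m.divisors, (d:ℝ)) * ((m:ℝ) * Real.log (Real.log m)) := by
    calc (∑ d ∈ m.divisors, (d:ℝ)) * ((m:ℝ) * (p:ℝ) * Real.log (Real.log N))
        = (∑ d ∈ m.divisors, (d:ℝ)) * ((N:ℝ) * Real.log (Real.log N)) := by rw [hNmp]
      _ ≤ (∑ d ∈ N.divisors, (d:ℝ)) * ((m:ℝ) * Real.log (Real.log m)) := hG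
      _ ≤ (((p:ℝ)+1) * ∑ d ∈ m.divisors, (d:ℝ)) * ((m:ℝ) * Real.log (Real.log m)) := by
          apply mul_le_mul_of_nonneg_right hsigN (by positivity)
  have hcross : (p:ℝ) * Real.log (Real.log N) ≤ ((p:ℝ)+1) * Real.log (Real.log m) := by
    have h3 : ((p:ℝ) * Real.log (Real.log N)) * ((∑ d ∈ m.divisors, (d:ℝ)) * (m:ℝ)) ≤
        (((p:ℝ)+1) * Real.log (Real.log m)) * ((∑ d ∈ m.divisors, (d:ℝ)) * (m:ℝ)) := by
      linear_combination hG2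
    exact le_of_mul_le_mul_right h3 (by positivity)
  -- key step: p ≤ log N
  have hple : (p:ℝ) ≤ Real.log N := by
    by_contra hc
    push_neg at hc
    have hp1 : (0:ℝ) < (p:ℝ) + 1 := by linarith
    set t : ℝ := Real.log (Real.log N) / ((p:ℝ)+1) with htdef
    have ht : 0 < t := by positivity
    have hpt : ((p:ℝ)+1) * t = Real.log (Real.log N) := by
      rw [htdef]; field_simp
    have step1 : Real.log (Real.log N) - t ≤ Real.log (Real.log m) := by
      have h5 : ((p:ℝ)+1) * (Real.log (Real.log N) - t) ≤ ((p:ℝ)+1) * Real.log (Real.log m) := by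
        nlinarith [hcross, hpt]
      exact le_of_mul_le_mul_left h5 hp1
    have step2 : Real.log N / Real.exp t ≤ Real.log m := by
      have h5 := Real.exp_le_exp.mpr step1
      rwa [Real.exp_sub, Real.exp_log hx0, Real.exp_log hu0] at h5
    have hlogmul : Real.log N = Real.log m + Real.log p := by
      rw [hmp]; push_cast
      exact Real.log_mul (by positivity) (by positivity)
    have h6 : 1 - t ≤ (Real.exp t)⁻¹ := by
      rw [← Real.exp_neg]; linarith [Real.add_one_le_exp (-t)]
    have step3 : Real.log p ≤ Real.log N * t := by
      have h7 : Real.log N - Real.log N * (Real.exp t)⁻¹ ≤ Real.log N * t := by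
        nlinarith [hx0.le]
      have hdiv : Real.log N / Real.exp t = Real.log N * (Real.exp t)⁻¹ := div_eq_mul_inv _ _
      rw [hdiv] at step2
      linarith [hlogmul]
    have h8 : Real.log N * t < Real.log (Real.log N) := by
      have hlt : Real.log N * Real.log (Real.log N) < Real.log (Real.log N) * ((p:ℝ)+1) := by
        nlinarith
      calc Real.log N * t = Real.log N * Real.log (Real.log N) / ((p:ℝ)+1) := by
            rw [htdef]; ring
        _ < Real.log (Real.log N) := (div_lt_iff₀ hp1).mpr hlt
    have h9 : Real.log (Real.log N) < Real.log p := Real.log_lt_log hx0 hc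
    linarith
  -- N ≤ p ^ k
  have hNpk : N ≤ p ^ k := by
    have hprod := Nat.prod_primeFactorsList hN0
    have hlen : N.primeFactorsList.length = k := by
      rw [← ArithmeticFunction.cardFactors_apply, hΩ]
    calc N = N.primeFactorsList.prod := hprod.symm
      _ ≤ p ^ N.primeFactorsList.length := List.prod_le_pow_card _ _ (fun q hq =>
          Finset.le_max' _ q (by rw [← Nat.toFinset_factors]; exact List.mem_toFinset.mpr hq))
      _ = p ^ k := by rw [hlen]
  -- conclude
  refine ⟨hN8, ?_⟩
  have h10 : (N:ℝ) ≤ (Real.log N) ^ k := by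
    calc (N:ℝ) ≤ ((p:ℝ)) ^ k := by exact_mod_cast hNpk
      _ ≤ (Real.log N) ^ k := pow_le_pow_left₀ hppos.le hple k
  calc Real.log N ≤ Real.log ((Real.log N) ^ k) := Real.log_le_log hNpos h10
    _ = k * Real.log (Real.log N) := by rw [Real.log_pow]

theorem stmt12 (k : ℕ) (hk : 3 ≤ k) :
    {N : ℕ | IsGA1 N ∧ (ArithmeticFunction.cardFactors N) = k}.Finite ∧
    ∀ N : ℕ, IsGA1 N → (ArithmeticFunction.cardFactors N) = k →
      Real.log N / Real.log (Real.log N) ≤ (k : ℝ) := by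
  have key := fun N h1 h2 => ga1_key k N hk h1 h2
  constructor
  · -- finiteness: eventually k·log log n < log n
    have h1 : (fun x : ℝ => (k:ℝ) * Real.log (Real.log x)) =o[atTop] Real.log :=
      (Real.isLittleO_log_id_atTop.comp_tendsto Real.tendsto_log_atTop).const_mul_left _
    have h2 := h1.def one_half_pos
    have h3 : ∀ᶠ x : ℝ in atTop, 1 ≤ Real.log x :=
      Real.tendsto_log_atTop.eventually_ge_atTop 1
    have h4 : ∀ᶠ x : ℝ in atTop, (k:ℝ) * Real.log (Real.log x) < Real.log x := by
      filter_upwards [h2, h3] with x hx2 hx3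
      have habs : |Real.log x| = Real.log x := abs_of_nonneg (by linarith)
      calc (k:ℝ) * Real.log (Real.log x) ≤ ‖(k:ℝ) * Real.log (Real.log x)‖ := le_norm_self _
        _ ≤ 1/2 * ‖Real.log x‖ := hx2
        _ = 1/2 * Real.log x := by rw [Real.norm_eq_abs, habs]
        _ < Real.log x := by linarith
    have h5 : ∀ᶠ n : ℕ in atTop, (k:ℝ) * Real.log (Real.log n) < Real.log n :=
      tendsto_natCast_atTop_atTop.eventually h4
    obtain ⟨M, hM⟩ := eventually_atTop.mp h5
    apply Set.Finite.subset (Finset.range M).finite_toSet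
    intro N hN
    obtain ⟨hGA, hΩ⟩ := hN
    obtain ⟨-, hlog⟩ := key N hGA hΩ
    simp only [Finset.coe_range, Set.mem_Iio]
    by_contra hc
    push_neg at hc
    exact absurd hlog (not_le.mpr (hM N hc))
  · intro N hGA hΩ
    obtain ⟨hN8, hlog⟩ := key N hGA hΩ
    have hN8R : (8:ℝ) ≤ N := by exact_mod_cast hN8
    have hlogN2 : 2 < Real.log N := by
      have h8 : (2:ℝ) < Real.log 8 := by
        rw [Real.lt_log_iff_exp_lt (by norm_num), show (2:ℝ) = 1+1 by norm_num, Real.exp_add]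
        nlinarith [Real.exp_pos 1, Real.exp_one_lt_d9]
      linarith [Real.log_le_log (by norm_num : (0:ℝ) < 8) hN8R]
    have hB : 0 < Real.log (Real.log N) := Real.log_pos (by linarith)
    rw [div_le_iff₀ hB]
    exact hlog
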